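/- Under the same setup, the cash-or-nothing valuation holds: e^{-2rτ/σ²} ∫_0^∞ 𝟙_{[K,∞)}(y) ρ(y,S) dy = e^{-2rτ/σ²} N(d_2), where d_2 = (1/√(2τ))(log(S/K) + (2/σ²)(r-q+σ²/2)τ) - √(2τ). -/

import Mathlib

open MeasureTheory

/-- Standard normal CDF. -/
noncomputable def stdN (x : ℝ) : ℝ :=
  ∫ s in Set.Iic x, Real.exp (-s^2 / 2) / Real.sqrt (2 * Real.pi)

/-- Cash-or-nothing valuation: the discounted expectation of the payoff
`𝟙_{[K,∞)}(y)` under the lognormal transition density equals `e^{-2rτ/σ²} N(d₂)`. -/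
theorem stmt4 (K σ Δt r q τ : ℝ) (hK : 0 < K) (hσ : 0 < σ) (hΔt : 0 < Δt)
    (hτ : τ = σ^2 * Δt / 2) (S : ℝ) (hS : 0 < S) :
    Real.exp (-2 * r * τ / σ^2) *
      (∫ y in Set.Ioi (0:ℝ),
        (if K ≤ y then (1:ℝ) else 0) *
          ((1 / (2 * Real.sqrt (Real.pi * τ) * y)) *
            Real.exp (-(Real.log (y / S) - (2 / σ^2) * (r - q - σ^2 / 2) * τ)^2 / (4 * τ))))
    = Real.exp (-2 * r * τ / σ^2) *
        stdN ((Real.log (S / K) + (2 / σ^2) * (r - q + σ^2 / 2) * τ) / Real.sqrt (2 * τ)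
          - Real.sqrt (2 * τ)) := by
  have hτ0 : 0 < τ := by rw [hτ]; positivity
  set μ : ℝ := (2 / σ^2) * (r - q - σ^2 / 2) * τ with hμdef
  set c : ℝ := Real.sqrt (2 * τ) with hcdef
  have hc : 0 < c := Real.sqrt_pos.mpr (by positivity)
  have hc2 : c^2 = 2 * τ := Real.sq_sqrt (by positivity)
  set D : ℝ := (μ + Real.log (S / K)) / c with hDdef
  have hB : (2 / σ^2) * (r - q + σ^2 / 2) * τ = μ + 2 * τ := by
    rw [hμdef]; field_simp; ring
  have hD : (Real.log (S / K) + (2 / σ^2) * (r - q + σ^2 / 2) * τ) / c - c = D := by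
    rw [hB, hDdef, ← hc2]; field_simp; ring
  rw [hD]
  congr 1
  have himg : Set.Ioi (0:ℝ) = (fun s => S * Real.exp (μ - c * s)) '' Set.univ := by
    ext y
    simp only [Set.mem_Ioi, Set.image_univ, Set.mem_range]
    constructor
    · intro hy
      refine ⟨(μ - Real.log (y / S)) / c, ?_⟩
      rw [mul_div_cancel₀ _ hc.ne', sub_sub_cancel, Real.exp_log (by positivity),
        mul_div_cancel₀ _ hS.ne']
    · rintro ⟨s, rfl⟩; positivity
  rw [himg, integral_image_eq_integral_abs_deriv_smul MeasurableSet.univ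
      (f' := fun s => S * (Real.exp (μ - c * s) * -c))
      (fun s _ => by
        have h1 : HasDerivAt (fun s : ℝ => μ - c * s) (-c) s := by
          simpa using ((hasDerivAt_id s).const_mul c).const_sub μ
        exact ((h1.exp).const_mul S).hasDerivWithinAt)
      (fun a _ b _ hab => by
        have h1 : Real.exp (μ - c * a) = Real.exp (μ - c * b) :=
          mul_left_cancel₀ hS.ne' hab
        have h2 := Real.exp_injective h1
        have h3 : c * a = c * b := by
          have := sub_right_injective h2
          linarith [this]
        exact mul_left_cancel₀ hc.ne' h3)]
  rw [Measure.restrict_univ, stdN, ← integral_indicator measurableSet_Iic]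
  refine integral_congr_ae (Filter.Eventually.of_forall fun s => ?_)
  have hE : (0:ℝ) < Real.exp (μ - c * s) := Real.exp_pos _
  have hlog : Real.log (S * Real.exp (μ - c * s) / S) = μ - c * s := by
    have h0 : S * Real.exp (μ - c * s) / S = Real.exp (μ - c * s) := by field_simp
    rw [h0, Real.log_exp]
  have hiff : K ≤ S * Real.exp (μ - c * s) ↔ s ≤ D := by
    rw [hDdef, Real.log_div hS.ne' hK.ne', le_div_iff₀ hc,
      ← Real.log_le_log_iff hK (by positivity),
      Real.log_mul hS.ne' (Real.exp_ne_zero _), Real.log_exp]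
    constructor <;> intro h <;> nlinarith
  have hexp : -(Real.log (S * Real.exp (μ - c * s) / S) - μ)^2 / (4 * τ) = -s^2 / 2 := by
    rw [hlog]
    have : (μ - c * s - μ)^2 = c^2 * s^2 := by ring
    rw [this, hc2]
    field_simp
    ring
  simp only [smul_eq_mul, hexp]
  by_cases hsD : s ≤ D
  · rw [if_pos (hiff.mpr hsD), Set.indicator_of_mem (Set.mem_Iic.mpr hsD)]
    have hπτ : (0:ℝ) < Real.sqrt (Real.pi * τ) := Real.sqrt_pos.mpr (by positivity)
    have h2π : (0:ℝ) < Real.sqrt (2 * Real.pi) := Real.sqrt_pos.mpr (by positivity)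
    rw [abs_of_nonpos (by nlinarith [mul_pos (mul_pos hS hE) hc])]
    rw [Real.sqrt_mul (by norm_num : (0:ℝ) ≤ 2) Real.pi,
      Real.sqrt_mul (le_of_lt Real.pi_pos) τ, hcdef,
      Real.sqrt_mul (by norm_num : (0:ℝ) ≤ 2) τ]
    have h2s : (0:ℝ) < Real.sqrt 2 := by positivity
    have hπ : (0:ℝ) < Real.sqrt Real.pi := Real.sqrt_pos.mpr Real.pi_pos
    have hτs : (0:ℝ) < Real.sqrt τ := Real.sqrt_pos.mpr hτ0
    field_simp
    ring_nf
    rw [Real.sq_sqrt (by norm_num : (0:ℝ) ≤ 2)]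
  · rw [if_neg (fun h => hsD (hiff.mp h)), Set.indicator_of_notMem (by simpa using hsD)]
    simp
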